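/- For every point p in a finite set R ⊆ ℝ² that is a vertex of Conv(R), and every closed half-plane h containing R whose bounding line is at minimal distance from p among points of R, the wedge at p spanned by the two convex-hull edges incident to p is contained in h. -/

import Mathlib

abbrev Plane := EuclideanSpace ℝ (Fin 2)

lemma infDist_hyperplane (n : Plane) (hn : n ≠ 0) (c : ℝ) (x : Plane)
    (hx : (inner ℝ n x : ℝ) ≤ c) :
    Metric.infDist x {y : Plane | (inner ℝ n y : ℝ) = c} = (c - inner ℝ n x) / ‖n‖ := by
  have hn' : (0:ℝ) < ‖n‖ := norm_pos_iff.mpr hn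
  apply le_antisymm
  · -- witness
    set y : Plane := x + ((c - inner ℝ n x) / ‖n‖^2) • n with hy
    have hnn : (‖n‖:ℝ)^2 ≠ 0 := by positivity
    have hyS : (inner ℝ n y : ℝ) = c := by
      rw [hy, inner_add_right, inner_smul_right, real_inner_self_eq_norm_sq,
        div_mul_cancel₀ _ hnn]
      ring
    have hyS' : y ∈ {y : Plane | (inner ℝ n y : ℝ) = c} := hyS
    have := Metric.infDist_le_dist_of_mem (x := x) hyS' 
    calc Metric.infDist x {y : Plane | (inner ℝ n y : ℝ) = c} ≤ dist x y := this
      _ = (c - inner ℝ n x) / ‖n‖ := by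
          rw [dist_eq_norm, sub_add_cancel_left, norm_neg, norm_smul]
          rw [Real.norm_eq_abs, abs_of_nonneg (div_nonneg (by linarith) (by positivity))]
          field_simp
  · have hne : {y : Plane | (inner ℝ n y : ℝ) = c}.Nonempty := by
      refine ⟨(c / ‖n‖^2) • n, ?_⟩
      have hnn : (‖n‖:ℝ)^2 ≠ 0 := by positivity
      show (inner ℝ n _ : ℝ) = c
      rw [inner_smul_right, real_inner_self_eq_norm_sq, div_mul_cancel₀ _ hnn]
    rw [← not_lt]
    intro hlt
    obtain ⟨y, hyS, hd⟩ := (Metric.infDist_lt_iff hne).mp hlt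
    · replace hyS : (inner ℝ n y : ℝ) = c := hyS
      have h1 : c - inner ℝ n x = (inner ℝ n (y - x) : ℝ) := by
        rw [inner_sub_right, hyS]
      have h2 : (inner ℝ n (y - x) : ℝ) ≤ ‖n‖ * ‖y - x‖ := real_inner_le_norm n (y - x)
      rw [dist_eq_norm, ← norm_sub_rev] at hd
      have h3 := (lt_div_iff₀ hn').mp hd
      nlinarith

/-- If `p` is a vertex of the convex hull of a finite planar set `R`, `h` is a closed
half-plane `{x | ⟪n, x⟫ ≤ c}` containing `R` whose bounding line is at minimal distance
from `p` among points of `R`, and `q, r ∈ R` span the two convex-hull edges incident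
to `p`, then the wedge at `p` spanned by these two edge directions is contained in `h`. -/
theorem wedge_subset_halfplane
    (R : Finset Plane) (p q r : Plane)
    (hp : p ∈ R) (hq : q ∈ R) (hr : r ∈ R) (hqp : q ≠ p) (hrp : r ≠ p)
    (hpvert : p ∈ Set.extremePoints ℝ (convexHull ℝ (R : Set Plane)))
    (hedgeq : segment ℝ p q ⊆ frontier (convexHull ℝ (R : Set Plane)))
    (hedger : segment ℝ p r ⊆ frontier (convexHull ℝ (R : Set Plane)))
    (n : Plane) (c : ℝ) (hn : n ≠ 0)
    (hRh : ∀ x ∈ R, (inner ℝ n x : ℝ) ≤ c)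
    (hmin : ∀ x ∈ R, Metric.infDist p {y : Plane | (inner ℝ n y : ℝ) = c}
      ≤ Metric.infDist x {y : Plane | (inner ℝ n y : ℝ) = c}) :
    ∀ s t : ℝ, 0 ≤ s → 0 ≤ t → (inner ℝ n (p + s • (q - p) + t • (r - p)) : ℝ) ≤ c := by
  have hn' : (0:ℝ) < ‖n‖ := norm_pos_iff.mpr hn
  have key : ∀ x ∈ R, (inner ℝ n x : ℝ) ≤ inner ℝ n p := by
    intro x hx
    have := hmin x hx
    rw [infDist_hyperplane n hn c p (hRh p hp), infDist_hyperplane n hn c x (hRh x hx)] at this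
    rw [div_le_div_iff₀ hn' hn'] at this
    nlinarith
  intro s t hs ht
  have hq' := key q hq
  have hr' := key r hr
  have hsq : s * (inner ℝ n (q - p) : ℝ) ≤ 0 := by
    rw [inner_sub_right]
    exact mul_nonpos_of_nonneg_of_nonpos hs (by linarith)
  have htr : t * (inner ℝ n (r - p) : ℝ) ≤ 0 := by
    rw [inner_sub_right]
    exact mul_nonpos_of_nonneg_of_nonpos ht (by linarith)
  have hp' := hRh p hp
  rw [inner_add_right, inner_add_right, inner_smul_right, inner_smul_right]
  linarith
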